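/- The automorphism group of the Möbius–Kantor graph MK has exactly 96 elements. -/

import Mathlib

set_option maxRecDepth 40000


/-- The underlying relation of the Möbius–Kantor graph `GP(8,3)`. -/
def mkRel (v w : ZMod 8 × Fin 2) : Bool :=
  (v.2 == 0 && w.2 == 0 && (w.1 == v.1 + 1 || v.1 == w.1 + 1)) ||
  ((v.2 == 0 && w.2 == 1 || v.2 == 1 && w.2 == 0) && v.1 == w.1) ||
  (v.2 == 1 && w.2 == 1 && (w.1 == v.1 + 3 || v.1 == w.1 + 3))

/-- The Möbius–Kantor graph, i.e. the generalized Petersen graph `GP(8,3)`. -/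
def MK : SimpleGraph (ZMod 8 × Fin 2) where
  Adj v w := mkRel v w = true
  symm := ⟨by intro v w; revert v w; decide⟩
  loopless := ⟨by intro v; revert v; decide⟩

instance : DecidableRel MK.Adj := fun v w => inferInstanceAs (Decidable (mkRel v w = true))

noncomputable instance : Fintype (MK ≃g MK) :=
  Fintype.ofInjective (fun T => T.toEquiv) (fun T S h => by
    cases T; cases S; simpa using h)


def tblN : List Nat := [18364758544493064720, 11150031934501181040, 7680096216876858240, 16007370194296295280, 3383165079729233280, 13430857959577274640, 5941398207496756920, 3896865268703230680, 11979542555316228360, 8281898347851957720, 16310250171991389960, 1632927517893215160, 4576919186597834385, 14660500125976484385, 12379814322992670465, 10371169443738108705, 17237153132543596545, 8909879152842460305, 7135152348716707785, 5126507469462146025, 13207073143994032665, 286057449430800105, 17540033110238658585, 2862710455997912265, 5230100635053359010, 15854245471111801650, 13609588465146949650, 11024491629547770930, 17890474768731662610, 916281258141965730, 8364926490870986970, 5779829655271808250, 13860254592449557290, 1479802794566117370, 9546435215538164010, 3516032092185978330, 6459883573300627635, 17084028409216498755, 14839230665905864995, 12218245770767721795, 9894633870310504995, 2143811846819770035, 10740189322406765115,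 4745674258585188075, 7009612043763297675, 371337390116030955, 2709585732813418635, 15090037528415159355, 7689666511539018180, 18313811347463245140, 16066761804338958900, 13445776909200815700, 11124416808557251380, 3373594785058160580, 11969972260645155660, 5975457196831934460, 8237143182196391580, 1598868528549124860, 3939368671060165020, 16319820466653549900, 8917197100216822485, 10317970449042087525, 17260515945558909765, 14675419109959731045, 12354199746661948485, 4603377723305429205, 5169010837459374765, 17513574573522151005, 7205240135079235725, 13199755196610757725, 2828650917040614285, 243554081441435565, 923599205516327910, 10971292085230153590, 17913838131368571990, 15905193252114010230, 13547945091797265750, 5256559171760953830, 5822332473647440830, 9519976678821656430, 8398985480214552990, 13852936645066282350, 3481973102850276510, 1473328223595714750, 14777587258196475495, 6450313278629554935, 12201075023477454855, 2153382141481929975, 17134975640605499655, 9920249030613615975, 7052115411752137935, 10749759617068925055, 403144581793395375, 15080467233744086655, 4711615303609191855, 2667082364815665615]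

def tblInvN : List Nat := [18364758544493064720, 11150031934501181040, 7680096216876858240, 3383165079729233280, 16007370194296295280, 13430857959577274640, 5941398207496756920, 3896865268703230680, 14660500125976484385, 14777587258196475495, 4576919186597834385, 6450313278629554935, 16310250171991389960, 11979542555316228360, 12379814322992670465, 17134975640605499655, 17237153132543596545, 12201075023477454855, 2828650917040614285, 7009612043763297675, 13207073143994032665, 15080467233744086655, 17890474768731662610, 10971292085230153590, 2709585732813418635, 7205240135079235725, 13609588465146949650, 15905193252114010230, 17540033110238658585, 10749759617068925055, 8364926490870986970, 1473328223595714750, 8398985480214552990, 1479802794566117370, 9546435215538164010, 9519976678821656430, 6459883573300627635, 4603377723305429205, 14839230665905864995, 14675419109959731045, 3939368671060165020, 5975457196831934460, 5169010837459374765, 4745674258585188075, 5126507469462146025, 4711615303609191855, 5230100635053359010, 5256559171760953830, 11124416808557251380, 18313811347463245140, 16066761804338958900, 13445776909200815700, 7689666511539018180, 3373594785058160580, 8917197100216822485, 2143811846819770035, 8237143182196391580, 1598868528549124860, 9894633870310504995, 10317970449042087525, 11969972260645155660, 16319820466653549900, 17260515945558909765, 12218245770767721795, 12354199746661948485, 17084028409216498755,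 10740189322406765115, 17513574573522151005, 15854245471111801650, 13547945091797265750, 7135152348716707785, 2667082364815665615, 7052115411752137935, 2862710455997912265, 17913838131368571990, 11024491629547770930, 13199755196610757725, 15090037528415159355, 5822332473647440830, 3516032092185978330, 13860254592449557290, 13852936645066282350, 3481973102850276510, 5779829655271808250, 8281898347851957720, 1632927517893215160, 8909879152842460305, 2153382141481929975, 10371169443738108705, 9920249030613615975, 923599205516327910, 916281258141965730, 403144581793395375, 286057449430800105, 371337390116030955, 243554081441435565]

def encN (v : ZMod 8 × Fin 2) : Nat := v.1.val + 8 * v.2.val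

def decN (n : Nat) : ZMod 8 × Fin 2 :=
  (((n % 8 : ℕ) : ZMod 8), ⟨n / 8 % 2, by omega⟩)

def F (k : Fin 96) (v : ZMod 8 × Fin 2) : ZMod 8 × Fin 2 :=
  decN (tblN.getD k.val 0 / 16 ^ encN v % 16)

def Finv (k : Fin 96) (v : ZMod 8 × Fin 2) : ZMod 8 × Fin 2 :=
  decN (tblInvN.getD k.val 0 / 16 ^ encN v % 16)

set_option maxHeartbeats 4000000 in
lemma F_left_inv : ∀ k v, Finv k (F k v) = v := by decide

set_option maxHeartbeats 4000000 in
lemma F_right_inv : ∀ k v, F k (Finv k v) = v := by decide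

set_option maxHeartbeats 4000000 in
lemma F_adj : ∀ k v w, mkRel (F k v) (F k w) = mkRel v w := by decide

def q (k : Fin 96) : MK ≃g MK where
  toFun := F k
  invFun := Finv k
  left_inv := F_left_inv k
  right_inv := F_right_inv k
  map_rel_iff' := by
    intro v w
    show mkRel (F _ _) (F _ _) = true ↔ mkRel _ _ = true
    rw [F_adj]

theorem rigid (U : MK ≃g MK) (ha : U ((0 : ZMod 8), (0 : Fin 2)) = ((0 : ZMod 8), (0 : Fin 2)))
    (hb : U ((1 : ZMod 8), (0 : Fin 2)) = ((1 : ZMod 8), (0 : Fin 2)))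
    (hc : U ((0 : ZMod 8), (1 : Fin 2)) = ((0 : ZMod 8), (1 : Fin 2))) :
    ∀ v, U v = v := by
  have h1 : MK.Adj ((0 : ZMod 8), (0 : Fin 2)) (U ((7 : ZMod 8), (0 : Fin 2))) := by
    have := U.map_rel_iff.mpr (show MK.Adj ((0 : ZMod 8), (0 : Fin 2)) ((7 : ZMod 8), (0 : Fin 2)) by decide)
    rwa [ha] at this
  rcases (show ∀ w, MK.Adj ((0 : ZMod 8), (0 : Fin 2)) w → (w = ((0 : ZMod 8), (1 : Fin 2)) ∨ w = ((1 : ZMod 8), (0 : Fin 2)) ∨ w = ((7 : ZMod 8), (0 : Fin 2))) by decide) _ h1 with h2|h2|h2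
  · exact absurd (U.injective (h2.trans hc.symm)) (by decide)
  · exact absurd (U.injective (h2.trans hb.symm)) (by decide)
  ·
    have h3 : MK.Adj ((1 : ZMod 8), (0 : Fin 2)) (U ((1 : ZMod 8), (1 : Fin 2))) := by
      have := U.map_rel_iff.mpr (show MK.Adj ((1 : ZMod 8), (0 : Fin 2)) ((1 : ZMod 8), (1 : Fin 2)) by decide)
      rwa [hb] at this
    rcases (show ∀ w, MK.Adj ((1 : ZMod 8), (0 : Fin 2)) w → (w = ((0 : ZMod 8), (0 : Fin 2)) ∨ w = ((1 : ZMod 8), (1 : Fin 2)) ∨ w = ((2 : ZMod 8), (0 : Fin 2))) by decide) _ h3 with h4|h4|h4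
    · exact absurd (U.injective (h4.trans ha.symm)) (by decide)
    ·
      have h5 : MK.Adj ((1 : ZMod 8), (0 : Fin 2)) (U ((2 : ZMod 8), (0 : Fin 2))) := by
        have := U.map_rel_iff.mpr (show MK.Adj ((1 : ZMod 8), (0 : Fin 2)) ((2 : ZMod 8), (0 : Fin 2)) by decide)
        rwa [hb] at this
      rcases (show ∀ w, MK.Adj ((1 : ZMod 8), (0 : Fin 2)) w → (w = ((0 : ZMod 8), (0 : Fin 2)) ∨ w = ((1 : ZMod 8), (1 : Fin 2)) ∨ w = ((2 : ZMod 8), (0 : Fin 2))) by decide) _ h5 with h6|h6|h6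
      · exact absurd (U.injective (h6.trans ha.symm)) (by decide)
      · exact absurd (U.injective (h6.trans h4.symm)) (by decide)
      ·
        have h7 : MK.Adj ((0 : ZMod 8), (1 : Fin 2)) (U ((3 : ZMod 8), (1 : Fin 2))) := by
          have := U.map_rel_iff.mpr (show MK.Adj ((0 : ZMod 8), (1 : Fin 2)) ((3 : ZMod 8), (1 : Fin 2)) by decide)
          rwa [hc] at this
        rcases (show ∀ w, MK.Adj ((0 : ZMod 8), (1 : Fin 2)) w → (w = ((0 : ZMod 8), (0 : Fin 2)) ∨ w = ((3 : ZMod 8), (1 : Fin 2)) ∨ w = ((5 : ZMod 8), (1 : Fin 2))) by decide) _ h7 with h8|h8|h8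
        · exact absurd (U.injective (h8.trans ha.symm)) (by decide)
        ·
          have h9 : MK.Adj ((0 : ZMod 8), (1 : Fin 2)) (U ((5 : ZMod 8), (1 : Fin 2))) := by
            have := U.map_rel_iff.mpr (show MK.Adj ((0 : ZMod 8), (1 : Fin 2)) ((5 : ZMod 8), (1 : Fin 2)) by decide)
            rwa [hc] at this
          rcases (show ∀ w, MK.Adj ((0 : ZMod 8), (1 : Fin 2)) w → (w = ((0 : ZMod 8), (0 : Fin 2)) ∨ w = ((3 : ZMod 8), (1 : Fin 2)) ∨ w = ((5 : ZMod 8), (1 : Fin 2))) by decide) _ h9 with h10|h10|h10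
          · exact absurd (U.injective (h10.trans ha.symm)) (by decide)
          · exact absurd (U.injective (h10.trans h8.symm)) (by decide)
          ·
            have h11 : MK.Adj ((7 : ZMod 8), (0 : Fin 2)) (U ((6 : ZMod 8), (0 : Fin 2))) := by
              have := U.map_rel_iff.mpr (show MK.Adj ((7 : ZMod 8), (0 : Fin 2)) ((6 : ZMod 8), (0 : Fin 2)) by decide)
              rwa [h2] at this
            rcases (show ∀ w, MK.Adj ((7 : ZMod 8), (0 : Fin 2)) w → (w = ((0 : ZMod 8), (0 : Fin 2)) ∨ w = ((6 : ZMod 8), (0 : Fin 2)) ∨ w = ((7 : ZMod 8), (1 : Fin 2))) by decide) _ h11 with h12|h12|h12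
            · exact absurd (U.injective (h12.trans ha.symm)) (by decide)
            ·
              have h13 : MK.Adj ((7 : ZMod 8), (0 : Fin 2)) (U ((7 : ZMod 8), (1 : Fin 2))) := by
                have := U.map_rel_iff.mpr (show MK.Adj ((7 : ZMod 8), (0 : Fin 2)) ((7 : ZMod 8), (1 : Fin 2)) by decide)
                rwa [h2] at this
              rcases (show ∀ w, MK.Adj ((7 : ZMod 8), (0 : Fin 2)) w → (w = ((0 : ZMod 8), (0 : Fin 2)) ∨ w = ((6 : ZMod 8), (0 : Fin 2)) ∨ w = ((7 : ZMod 8), (1 : Fin 2))) by decide) _ h13 with h14|h14|h14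
              · exact absurd (U.injective (h14.trans ha.symm)) (by decide)
              · exact absurd (U.injective (h14.trans h12.symm)) (by decide)
              ·
                have h15 : MK.Adj ((1 : ZMod 8), (1 : Fin 2)) (U ((4 : ZMod 8), (1 : Fin 2))) := by
                  have := U.map_rel_iff.mpr (show MK.Adj ((1 : ZMod 8), (1 : Fin 2)) ((4 : ZMod 8), (1 : Fin 2)) by decide)
                  rwa [h4] at this
                rcases (show ∀ w, MK.Adj ((1 : ZMod 8), (1 : Fin 2)) w → (w = ((1 : ZMod 8), (0 : Fin 2)) ∨ w = ((4 : ZMod 8), (1 : Fin 2)) ∨ w = ((6 : ZMod 8), (1 : Fin 2))) by decide) _ h15 with h16|h16|h16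
                · exact absurd (U.injective (h16.trans hb.symm)) (by decide)
                ·
                  have h17 : MK.Adj ((1 : ZMod 8), (1 : Fin 2)) (U ((6 : ZMod 8), (1 : Fin 2))) := by
                    have := U.map_rel_iff.mpr (show MK.Adj ((1 : ZMod 8), (1 : Fin 2)) ((6 : ZMod 8), (1 : Fin 2)) by decide)
                    rwa [h4] at this
                  rcases (show ∀ w, MK.Adj ((1 : ZMod 8), (1 : Fin 2)) w → (w = ((1 : ZMod 8), (0 : Fin 2)) ∨ w = ((4 : ZMod 8), (1 : Fin 2)) ∨ w = ((6 : ZMod 8), (1 : Fin 2))) by decide) _ h17 with h18|h18|h18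
                  · exact absurd (U.injective (h18.trans hb.symm)) (by decide)
                  · exact absurd (U.injective (h18.trans h16.symm)) (by decide)
                  ·
                    have h19 : MK.Adj ((2 : ZMod 8), (0 : Fin 2)) (U ((2 : ZMod 8), (1 : Fin 2))) := by
                      have := U.map_rel_iff.mpr (show MK.Adj ((2 : ZMod 8), (0 : Fin 2)) ((2 : ZMod 8), (1 : Fin 2)) by decide)
                      rwa [h6] at this
                    rcases (show ∀ w, MK.Adj ((2 : ZMod 8), (0 : Fin 2)) w → (w = ((1 : ZMod 8), (0 : Fin 2)) ∨ w = ((2 : ZMod 8), (1 : Fin 2)) ∨ w = ((3 : ZMod 8), (0 : Fin 2))) by decide) _ h19 with h20|h20|h20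
                    · exact absurd (U.injective (h20.trans hb.symm)) (by decide)
                    ·
                      have h21 : MK.Adj ((2 : ZMod 8), (0 : Fin 2)) (U ((3 : ZMod 8), (0 : Fin 2))) := by
                        have := U.map_rel_iff.mpr (show MK.Adj ((2 : ZMod 8), (0 : Fin 2)) ((3 : ZMod 8), (0 : Fin 2)) by decide)
                        rwa [h6] at this
                      rcases (show ∀ w, MK.Adj ((2 : ZMod 8), (0 : Fin 2)) w → (w = ((1 : ZMod 8), (0 : Fin 2)) ∨ w = ((2 : ZMod 8), (1 : Fin 2)) ∨ w = ((3 : ZMod 8), (0 : Fin 2))) by decide) _ h21 with h22|h22|h22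
                      · exact absurd (U.injective (h22.trans hb.symm)) (by decide)
                      · exact absurd (U.injective (h22.trans h20.symm)) (by decide)
                      ·
                        have h23 : MK.Adj ((5 : ZMod 8), (1 : Fin 2)) (U ((5 : ZMod 8), (0 : Fin 2))) := by
                          have := U.map_rel_iff.mpr (show MK.Adj ((5 : ZMod 8), (1 : Fin 2)) ((5 : ZMod 8), (0 : Fin 2)) by decide)
                          rwa [h10] at this
                        rcases (show ∀ w, MK.Adj ((5 : ZMod 8), (1 : Fin 2)) w → (w = ((0 : ZMod 8), (1 : Fin 2)) ∨ w = ((2 : ZMod 8), (1 : Fin 2)) ∨ w = ((5 : ZMod 8), (0 : Fin 2))) by decide) _ h23 with h24|h24|h24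
                        · exact absurd (U.injective (h24.trans hc.symm)) (by decide)
                        · exact absurd (U.injective (h24.trans h20.symm)) (by decide)
                        ·
                          have h25 : MK.Adj ((4 : ZMod 8), (1 : Fin 2)) (U ((4 : ZMod 8), (0 : Fin 2))) := by
                            have := U.map_rel_iff.mpr (show MK.Adj ((4 : ZMod 8), (1 : Fin 2)) ((4 : ZMod 8), (0 : Fin 2)) by decide)
                            rwa [h16] at this
                          rcases (show ∀ w, MK.Adj ((4 : ZMod 8), (1 : Fin 2)) w → (w = ((1 : ZMod 8), (1 : Fin 2)) ∨ w = ((4 : ZMod 8), (0 : Fin 2)) ∨ w = ((7 : ZMod 8), (1 : Fin 2))) by decide) _ h25 with h26|h26|h26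
                          · exact absurd (U.injective (h26.trans h4.symm)) (by decide)
                          ·
                            intro v
                            rcases (show ∀ v : ZMod 8 × Fin 2, v = ((0 : ZMod 8), (0 : Fin 2)) ∨ v = ((0 : ZMod 8), (1 : Fin 2)) ∨ v = ((1 : ZMod 8), (0 : Fin 2)) ∨ v = ((1 : ZMod 8), (1 : Fin 2)) ∨ v = ((2 : ZMod 8), (0 : Fin 2)) ∨ v = ((2 : ZMod 8), (1 : Fin 2)) ∨ v = ((3 : ZMod 8), (0 : Fin 2)) ∨ v = ((3 : ZMod 8), (1 : Fin 2)) ∨ v = ((4 : ZMod 8), (0 : Fin 2)) ∨ v = ((4 : ZMod 8), (1 : Fin 2)) ∨ v = ((5 : ZMod 8), (0 : Fin 2)) ∨ v = ((5 : ZMod 8), (1 : Fin 2)) ∨ v = ((6 : ZMod 8), (0 : Fin 2)) ∨ v = ((6 : ZMod 8), (1 : Fin 2)) ∨ v = ((7 : ZMod 8), (0 : Fin 2)) ∨ v = ((7 : ZMod 8), (1 : Fin 2)) by decide) v with rfl|rfl|rfl|rfl|rfl|rfl|rfl|rfl|rfl|rfl|rfl|rfl|rfl|rfl|rfl|rfl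
                            all_goals assumption
                          · exact absurd (U.injective (h26.trans h14.symm)) (by decide)
                    · have hiff : MK.Adj (U ((2 : ZMod 8), (1 : Fin 2))) (U ((3 : ZMod 8), (1 : Fin 2))) ↔ MK.Adj ((2 : ZMod 8), (1 : Fin 2)) ((3 : ZMod 8), (1 : Fin 2)) := U.map_rel_iff
                      rw [h20, h8] at hiff
                      exact absurd hiff (by decide)
                · have hiff : MK.Adj (U ((4 : ZMod 8), (1 : Fin 2))) (U ((3 : ZMod 8), (1 : Fin 2))) ↔ MK.Adj ((4 : ZMod 8), (1 : Fin 2)) ((3 : ZMod 8), (1 : Fin 2)) := U.map_rel_iff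
                  rw [h16, h8] at hiff
                  exact absurd hiff (by decide)
            ·
              have h27 : MK.Adj ((7 : ZMod 8), (0 : Fin 2)) (U ((7 : ZMod 8), (1 : Fin 2))) := by
                have := U.map_rel_iff.mpr (show MK.Adj ((7 : ZMod 8), (0 : Fin 2)) ((7 : ZMod 8), (1 : Fin 2)) by decide)
                rwa [h2] at this
              rcases (show ∀ w, MK.Adj ((7 : ZMod 8), (0 : Fin 2)) w → (w = ((0 : ZMod 8), (0 : Fin 2)) ∨ w = ((6 : ZMod 8), (0 : Fin 2)) ∨ w = ((7 : ZMod 8), (1 : Fin 2))) by decide) _ h27 with h28|h28|h28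
              · exact absurd (U.injective (h28.trans ha.symm)) (by decide)
              ·
                have h29 : MK.Adj ((1 : ZMod 8), (1 : Fin 2)) (U ((4 : ZMod 8), (1 : Fin 2))) := by
                  have := U.map_rel_iff.mpr (show MK.Adj ((1 : ZMod 8), (1 : Fin 2)) ((4 : ZMod 8), (1 : Fin 2)) by decide)
                  rwa [h4] at this
                rcases (show ∀ w, MK.Adj ((1 : ZMod 8), (1 : Fin 2)) w → (w = ((1 : ZMod 8), (0 : Fin 2)) ∨ w = ((4 : ZMod 8), (1 : Fin 2)) ∨ w = ((6 : ZMod 8), (1 : Fin 2))) by decide) _ h29 with h30|h30|h30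
                · exact absurd (U.injective (h30.trans hb.symm)) (by decide)
                · have hiff : MK.Adj (U ((4 : ZMod 8), (1 : Fin 2))) (U ((6 : ZMod 8), (0 : Fin 2))) ↔ MK.Adj ((4 : ZMod 8), (1 : Fin 2)) ((6 : ZMod 8), (0 : Fin 2)) := U.map_rel_iff
                  rw [h30, h12] at hiff
                  exact absurd hiff (by decide)
                · have hiff : MK.Adj (U ((4 : ZMod 8), (1 : Fin 2))) (U ((3 : ZMod 8), (1 : Fin 2))) ↔ MK.Adj ((4 : ZMod 8), (1 : Fin 2)) ((3 : ZMod 8), (1 : Fin 2)) := U.map_rel_iff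
                  rw [h30, h8] at hiff
                  exact absurd hiff (by decide)
              · exact absurd (U.injective (h28.trans h12.symm)) (by decide)
        ·
          have h31 : MK.Adj ((0 : ZMod 8), (1 : Fin 2)) (U ((5 : ZMod 8), (1 : Fin 2))) := by
            have := U.map_rel_iff.mpr (show MK.Adj ((0 : ZMod 8), (1 : Fin 2)) ((5 : ZMod 8), (1 : Fin 2)) by decide)
            rwa [hc] at this
          rcases (show ∀ w, MK.Adj ((0 : ZMod 8), (1 : Fin 2)) w → (w = ((0 : ZMod 8), (0 : Fin 2)) ∨ w = ((3 : ZMod 8), (1 : Fin 2)) ∨ w = ((5 : ZMod 8), (1 : Fin 2))) by decide) _ h31 with h32|h32|h32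
          · exact absurd (U.injective (h32.trans ha.symm)) (by decide)
          ·
            have h33 : MK.Adj ((7 : ZMod 8), (0 : Fin 2)) (U ((6 : ZMod 8), (0 : Fin 2))) := by
              have := U.map_rel_iff.mpr (show MK.Adj ((7 : ZMod 8), (0 : Fin 2)) ((6 : ZMod 8), (0 : Fin 2)) by decide)
              rwa [h2] at this
            rcases (show ∀ w, MK.Adj ((7 : ZMod 8), (0 : Fin 2)) w → (w = ((0 : ZMod 8), (0 : Fin 2)) ∨ w = ((6 : ZMod 8), (0 : Fin 2)) ∨ w = ((7 : ZMod 8), (1 : Fin 2))) by decide) _ h33 with h34|h34|h34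
            · exact absurd (U.injective (h34.trans ha.symm)) (by decide)
            ·
              have h35 : MK.Adj ((7 : ZMod 8), (0 : Fin 2)) (U ((7 : ZMod 8), (1 : Fin 2))) := by
                have := U.map_rel_iff.mpr (show MK.Adj ((7 : ZMod 8), (0 : Fin 2)) ((7 : ZMod 8), (1 : Fin 2)) by decide)
                rwa [h2] at this
              rcases (show ∀ w, MK.Adj ((7 : ZMod 8), (0 : Fin 2)) w → (w = ((0 : ZMod 8), (0 : Fin 2)) ∨ w = ((6 : ZMod 8), (0 : Fin 2)) ∨ w = ((7 : ZMod 8), (1 : Fin 2))) by decide) _ h35 with h36|h36|h36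
              · exact absurd (U.injective (h36.trans ha.symm)) (by decide)
              · exact absurd (U.injective (h36.trans h34.symm)) (by decide)
              ·
                have h37 : MK.Adj ((1 : ZMod 8), (1 : Fin 2)) (U ((4 : ZMod 8), (1 : Fin 2))) := by
                  have := U.map_rel_iff.mpr (show MK.Adj ((1 : ZMod 8), (1 : Fin 2)) ((4 : ZMod 8), (1 : Fin 2)) by decide)
                  rwa [h4] at this
                rcases (show ∀ w, MK.Adj ((1 : ZMod 8), (1 : Fin 2)) w → (w = ((1 : ZMod 8), (0 : Fin 2)) ∨ w = ((4 : ZMod 8), (1 : Fin 2)) ∨ w = ((6 : ZMod 8), (1 : Fin 2))) by decide) _ h37 with h38|h38|h38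
                · exact absurd (U.injective (h38.trans hb.symm)) (by decide)
                ·
                  have h39 : MK.Adj ((1 : ZMod 8), (1 : Fin 2)) (U ((6 : ZMod 8), (1 : Fin 2))) := by
                    have := U.map_rel_iff.mpr (show MK.Adj ((1 : ZMod 8), (1 : Fin 2)) ((6 : ZMod 8), (1 : Fin 2)) by decide)
                    rwa [h4] at this
                  rcases (show ∀ w, MK.Adj ((1 : ZMod 8), (1 : Fin 2)) w → (w = ((1 : ZMod 8), (0 : Fin 2)) ∨ w = ((4 : ZMod 8), (1 : Fin 2)) ∨ w = ((6 : ZMod 8), (1 : Fin 2))) by decide) _ h39 with h40|h40|h40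
                  · exact absurd (U.injective (h40.trans hb.symm)) (by decide)
                  · exact absurd (U.injective (h40.trans h38.symm)) (by decide)
                  · have hiff : MK.Adj (U ((6 : ZMod 8), (1 : Fin 2))) (U ((3 : ZMod 8), (1 : Fin 2))) ↔ MK.Adj ((6 : ZMod 8), (1 : Fin 2)) ((3 : ZMod 8), (1 : Fin 2)) := U.map_rel_iff
                    rw [h40, h8] at hiff
                    exact absurd hiff (by decide)
                · have hiff : MK.Adj (U ((4 : ZMod 8), (1 : Fin 2))) (U ((5 : ZMod 8), (1 : Fin 2))) ↔ MK.Adj ((4 : ZMod 8), (1 : Fin 2)) ((5 : ZMod 8), (1 : Fin 2)) := U.map_rel_iff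
                  rw [h38, h32] at hiff
                  exact absurd hiff (by decide)
            ·
              have h41 : MK.Adj ((7 : ZMod 8), (0 : Fin 2)) (U ((7 : ZMod 8), (1 : Fin 2))) := by
                have := U.map_rel_iff.mpr (show MK.Adj ((7 : ZMod 8), (0 : Fin 2)) ((7 : ZMod 8), (1 : Fin 2)) by decide)
                rwa [h2] at this
              rcases (show ∀ w, MK.Adj ((7 : ZMod 8), (0 : Fin 2)) w → (w = ((0 : ZMod 8), (0 : Fin 2)) ∨ w = ((6 : ZMod 8), (0 : Fin 2)) ∨ w = ((7 : ZMod 8), (1 : Fin 2))) by decide) _ h41 with h42|h42|h42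
              · exact absurd (U.injective (h42.trans ha.symm)) (by decide)
              ·
                have h43 : MK.Adj ((1 : ZMod 8), (1 : Fin 2)) (U ((4 : ZMod 8), (1 : Fin 2))) := by
                  have := U.map_rel_iff.mpr (show MK.Adj ((1 : ZMod 8), (1 : Fin 2)) ((4 : ZMod 8), (1 : Fin 2)) by decide)
                  rwa [h4] at this
                rcases (show ∀ w, MK.Adj ((1 : ZMod 8), (1 : Fin 2)) w → (w = ((1 : ZMod 8), (0 : Fin 2)) ∨ w = ((4 : ZMod 8), (1 : Fin 2)) ∨ w = ((6 : ZMod 8), (1 : Fin 2))) by decide) _ h43 with h44|h44|h44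
                · exact absurd (U.injective (h44.trans hb.symm)) (by decide)
                · have hiff : MK.Adj (U ((4 : ZMod 8), (1 : Fin 2))) (U ((6 : ZMod 8), (0 : Fin 2))) ↔ MK.Adj ((4 : ZMod 8), (1 : Fin 2)) ((6 : ZMod 8), (0 : Fin 2)) := U.map_rel_iff
                  rw [h44, h34] at hiff
                  exact absurd hiff (by decide)
                · have hiff : MK.Adj (U ((4 : ZMod 8), (1 : Fin 2))) (U ((5 : ZMod 8), (1 : Fin 2))) ↔ MK.Adj ((4 : ZMod 8), (1 : Fin 2)) ((5 : ZMod 8), (1 : Fin 2)) := U.map_rel_iff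
                  rw [h44, h32] at hiff
                  exact absurd hiff (by decide)
              · exact absurd (U.injective (h42.trans h34.symm)) (by decide)
          · exact absurd (U.injective (h32.trans h8.symm)) (by decide)
    ·
      have h45 : MK.Adj ((1 : ZMod 8), (0 : Fin 2)) (U ((2 : ZMod 8), (0 : Fin 2))) := by
        have := U.map_rel_iff.mpr (show MK.Adj ((1 : ZMod 8), (0 : Fin 2)) ((2 : ZMod 8), (0 : Fin 2)) by decide)
        rwa [hb] at this
      rcases (show ∀ w, MK.Adj ((1 : ZMod 8), (0 : Fin 2)) w → (w = ((0 : ZMod 8), (0 : Fin 2)) ∨ w = ((1 : ZMod 8), (1 : Fin 2)) ∨ w = ((2 : ZMod 8), (0 : Fin 2))) by decide) _ h45 with h46|h46|h46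
      · exact absurd (U.injective (h46.trans ha.symm)) (by decide)
      ·
        have h47 : MK.Adj ((0 : ZMod 8), (1 : Fin 2)) (U ((3 : ZMod 8), (1 : Fin 2))) := by
          have := U.map_rel_iff.mpr (show MK.Adj ((0 : ZMod 8), (1 : Fin 2)) ((3 : ZMod 8), (1 : Fin 2)) by decide)
          rwa [hc] at this
        rcases (show ∀ w, MK.Adj ((0 : ZMod 8), (1 : Fin 2)) w → (w = ((0 : ZMod 8), (0 : Fin 2)) ∨ w = ((3 : ZMod 8), (1 : Fin 2)) ∨ w = ((5 : ZMod 8), (1 : Fin 2))) by decide) _ h47 with h48|h48|h48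
        · exact absurd (U.injective (h48.trans ha.symm)) (by decide)
        ·
          have h49 : MK.Adj ((0 : ZMod 8), (1 : Fin 2)) (U ((5 : ZMod 8), (1 : Fin 2))) := by
            have := U.map_rel_iff.mpr (show MK.Adj ((0 : ZMod 8), (1 : Fin 2)) ((5 : ZMod 8), (1 : Fin 2)) by decide)
            rwa [hc] at this
          rcases (show ∀ w, MK.Adj ((0 : ZMod 8), (1 : Fin 2)) w → (w = ((0 : ZMod 8), (0 : Fin 2)) ∨ w = ((3 : ZMod 8), (1 : Fin 2)) ∨ w = ((5 : ZMod 8), (1 : Fin 2))) by decide) _ h49 with h50|h50|h50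
          · exact absurd (U.injective (h50.trans ha.symm)) (by decide)
          · exact absurd (U.injective (h50.trans h48.symm)) (by decide)
          ·
            have h51 : MK.Adj ((7 : ZMod 8), (0 : Fin 2)) (U ((6 : ZMod 8), (0 : Fin 2))) := by
              have := U.map_rel_iff.mpr (show MK.Adj ((7 : ZMod 8), (0 : Fin 2)) ((6 : ZMod 8), (0 : Fin 2)) by decide)
              rwa [h2] at this
            rcases (show ∀ w, MK.Adj ((7 : ZMod 8), (0 : Fin 2)) w → (w = ((0 : ZMod 8), (0 : Fin 2)) ∨ w = ((6 : ZMod 8), (0 : Fin 2)) ∨ w = ((7 : ZMod 8), (1 : Fin 2))) by decide) _ h51 with h52|h52|h52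
            · exact absurd (U.injective (h52.trans ha.symm)) (by decide)
            ·
              have h53 : MK.Adj ((7 : ZMod 8), (0 : Fin 2)) (U ((7 : ZMod 8), (1 : Fin 2))) := by
                have := U.map_rel_iff.mpr (show MK.Adj ((7 : ZMod 8), (0 : Fin 2)) ((7 : ZMod 8), (1 : Fin 2)) by decide)
                rwa [h2] at this
              rcases (show ∀ w, MK.Adj ((7 : ZMod 8), (0 : Fin 2)) w → (w = ((0 : ZMod 8), (0 : Fin 2)) ∨ w = ((6 : ZMod 8), (0 : Fin 2)) ∨ w = ((7 : ZMod 8), (1 : Fin 2))) by decide) _ h53 with h54|h54|h54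
              · exact absurd (U.injective (h54.trans ha.symm)) (by decide)
              · exact absurd (U.injective (h54.trans h52.symm)) (by decide)
              ·
                have h55 : MK.Adj ((2 : ZMod 8), (0 : Fin 2)) (U ((4 : ZMod 8), (1 : Fin 2))) := by
                  have := U.map_rel_iff.mpr (show MK.Adj ((1 : ZMod 8), (1 : Fin 2)) ((4 : ZMod 8), (1 : Fin 2)) by decide)
                  rwa [h4] at this
                rcases (show ∀ w, MK.Adj ((2 : ZMod 8), (0 : Fin 2)) w → (w = ((1 : ZMod 8), (0 : Fin 2)) ∨ w = ((2 : ZMod 8), (1 : Fin 2)) ∨ w = ((3 : ZMod 8), (0 : Fin 2))) by decide) _ h55 with h56|h56|h56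
                · exact absurd (U.injective (h56.trans hb.symm)) (by decide)
                · have hiff : MK.Adj (U ((4 : ZMod 8), (1 : Fin 2))) (U ((5 : ZMod 8), (1 : Fin 2))) ↔ MK.Adj ((4 : ZMod 8), (1 : Fin 2)) ((5 : ZMod 8), (1 : Fin 2)) := U.map_rel_iff
                  rw [h56, h50] at hiff
                  exact absurd hiff (by decide)
                · have hiff : MK.Adj (U ((4 : ZMod 8), (1 : Fin 2))) (U ((3 : ZMod 8), (1 : Fin 2))) ↔ MK.Adj ((4 : ZMod 8), (1 : Fin 2)) ((3 : ZMod 8), (1 : Fin 2)) := U.map_rel_iff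
                  rw [h56, h48] at hiff
                  exact absurd hiff (by decide)
            ·
              have h57 : MK.Adj ((7 : ZMod 8), (0 : Fin 2)) (U ((7 : ZMod 8), (1 : Fin 2))) := by
                have := U.map_rel_iff.mpr (show MK.Adj ((7 : ZMod 8), (0 : Fin 2)) ((7 : ZMod 8), (1 : Fin 2)) by decide)
                rwa [h2] at this
              rcases (show ∀ w, MK.Adj ((7 : ZMod 8), (0 : Fin 2)) w → (w = ((0 : ZMod 8), (0 : Fin 2)) ∨ w = ((6 : ZMod 8), (0 : Fin 2)) ∨ w = ((7 : ZMod 8), (1 : Fin 2))) by decide) _ h57 with h58|h58|h58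
              · exact absurd (U.injective (h58.trans ha.symm)) (by decide)
              ·
                have h59 : MK.Adj ((2 : ZMod 8), (0 : Fin 2)) (U ((4 : ZMod 8), (1 : Fin 2))) := by
                  have := U.map_rel_iff.mpr (show MK.Adj ((1 : ZMod 8), (1 : Fin 2)) ((4 : ZMod 8), (1 : Fin 2)) by decide)
                  rwa [h4] at this
                rcases (show ∀ w, MK.Adj ((2 : ZMod 8), (0 : Fin 2)) w → (w = ((1 : ZMod 8), (0 : Fin 2)) ∨ w = ((2 : ZMod 8), (1 : Fin 2)) ∨ w = ((3 : ZMod 8), (0 : Fin 2))) by decide) _ h59 with h60|h60|h60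
                · exact absurd (U.injective (h60.trans hb.symm)) (by decide)
                · have hiff : MK.Adj (U ((4 : ZMod 8), (1 : Fin 2))) (U ((5 : ZMod 8), (1 : Fin 2))) ↔ MK.Adj ((4 : ZMod 8), (1 : Fin 2)) ((5 : ZMod 8), (1 : Fin 2)) := U.map_rel_iff
                  rw [h60, h50] at hiff
                  exact absurd hiff (by decide)
                · have hiff : MK.Adj (U ((4 : ZMod 8), (1 : Fin 2))) (U ((3 : ZMod 8), (1 : Fin 2))) ↔ MK.Adj ((4 : ZMod 8), (1 : Fin 2)) ((3 : ZMod 8), (1 : Fin 2)) := U.map_rel_iff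
                  rw [h60, h48] at hiff
                  exact absurd hiff (by decide)
              · exact absurd (U.injective (h58.trans h52.symm)) (by decide)
        ·
          have h61 : MK.Adj ((0 : ZMod 8), (1 : Fin 2)) (U ((5 : ZMod 8), (1 : Fin 2))) := by
            have := U.map_rel_iff.mpr (show MK.Adj ((0 : ZMod 8), (1 : Fin 2)) ((5 : ZMod 8), (1 : Fin 2)) by decide)
            rwa [hc] at this
          rcases (show ∀ w, MK.Adj ((0 : ZMod 8), (1 : Fin 2)) w → (w = ((0 : ZMod 8), (0 : Fin 2)) ∨ w = ((3 : ZMod 8), (1 : Fin 2)) ∨ w = ((5 : ZMod 8), (1 : Fin 2))) by decide) _ h61 with h62|h62|h62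
          · exact absurd (U.injective (h62.trans ha.symm)) (by decide)
          ·
            have h63 : MK.Adj ((7 : ZMod 8), (0 : Fin 2)) (U ((6 : ZMod 8), (0 : Fin 2))) := by
              have := U.map_rel_iff.mpr (show MK.Adj ((7 : ZMod 8), (0 : Fin 2)) ((6 : ZMod 8), (0 : Fin 2)) by decide)
              rwa [h2] at this
            rcases (show ∀ w, MK.Adj ((7 : ZMod 8), (0 : Fin 2)) w → (w = ((0 : ZMod 8), (0 : Fin 2)) ∨ w = ((6 : ZMod 8), (0 : Fin 2)) ∨ w = ((7 : ZMod 8), (1 : Fin 2))) by decide) _ h63 with h64|h64|h64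
            · exact absurd (U.injective (h64.trans ha.symm)) (by decide)
            ·
              have h65 : MK.Adj ((7 : ZMod 8), (0 : Fin 2)) (U ((7 : ZMod 8), (1 : Fin 2))) := by
                have := U.map_rel_iff.mpr (show MK.Adj ((7 : ZMod 8), (0 : Fin 2)) ((7 : ZMod 8), (1 : Fin 2)) by decide)
                rwa [h2] at this
              rcases (show ∀ w, MK.Adj ((7 : ZMod 8), (0 : Fin 2)) w → (w = ((0 : ZMod 8), (0 : Fin 2)) ∨ w = ((6 : ZMod 8), (0 : Fin 2)) ∨ w = ((7 : ZMod 8), (1 : Fin 2))) by decide) _ h65 with h66|h66|h66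
              · exact absurd (U.injective (h66.trans ha.symm)) (by decide)
              · exact absurd (U.injective (h66.trans h64.symm)) (by decide)
              ·
                have h67 : MK.Adj ((2 : ZMod 8), (0 : Fin 2)) (U ((4 : ZMod 8), (1 : Fin 2))) := by
                  have := U.map_rel_iff.mpr (show MK.Adj ((1 : ZMod 8), (1 : Fin 2)) ((4 : ZMod 8), (1 : Fin 2)) by decide)
                  rwa [h4] at this
                rcases (show ∀ w, MK.Adj ((2 : ZMod 8), (0 : Fin 2)) w → (w = ((1 : ZMod 8), (0 : Fin 2)) ∨ w = ((2 : ZMod 8), (1 : Fin 2)) ∨ w = ((3 : ZMod 8), (0 : Fin 2))) by decide) _ h67 with h68|h68|h68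
                · exact absurd (U.injective (h68.trans hb.symm)) (by decide)
                · have hiff : MK.Adj (U ((4 : ZMod 8), (1 : Fin 2))) (U ((3 : ZMod 8), (1 : Fin 2))) ↔ MK.Adj ((4 : ZMod 8), (1 : Fin 2)) ((3 : ZMod 8), (1 : Fin 2)) := U.map_rel_iff
                  rw [h68, h48] at hiff
                  exact absurd hiff (by decide)
                · have hiff : MK.Adj (U ((4 : ZMod 8), (1 : Fin 2))) (U ((5 : ZMod 8), (1 : Fin 2))) ↔ MK.Adj ((4 : ZMod 8), (1 : Fin 2)) ((5 : ZMod 8), (1 : Fin 2)) := U.map_rel_iff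
                  rw [h68, h62] at hiff
                  exact absurd hiff (by decide)
            ·
              have h69 : MK.Adj ((7 : ZMod 8), (0 : Fin 2)) (U ((7 : ZMod 8), (1 : Fin 2))) := by
                have := U.map_rel_iff.mpr (show MK.Adj ((7 : ZMod 8), (0 : Fin 2)) ((7 : ZMod 8), (1 : Fin 2)) by decide)
                rwa [h2] at this
              rcases (show ∀ w, MK.Adj ((7 : ZMod 8), (0 : Fin 2)) w → (w = ((0 : ZMod 8), (0 : Fin 2)) ∨ w = ((6 : ZMod 8), (0 : Fin 2)) ∨ w = ((7 : ZMod 8), (1 : Fin 2))) by decide) _ h69 with h70|h70|h70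
              · exact absurd (U.injective (h70.trans ha.symm)) (by decide)
              ·
                have h71 : MK.Adj ((2 : ZMod 8), (0 : Fin 2)) (U ((4 : ZMod 8), (1 : Fin 2))) := by
                  have := U.map_rel_iff.mpr (show MK.Adj ((1 : ZMod 8), (1 : Fin 2)) ((4 : ZMod 8), (1 : Fin 2)) by decide)
                  rwa [h4] at this
                rcases (show ∀ w, MK.Adj ((2 : ZMod 8), (0 : Fin 2)) w → (w = ((1 : ZMod 8), (0 : Fin 2)) ∨ w = ((2 : ZMod 8), (1 : Fin 2)) ∨ w = ((3 : ZMod 8), (0 : Fin 2))) by decide) _ h71 with h72|h72|h72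
                · exact absurd (U.injective (h72.trans hb.symm)) (by decide)
                · have hiff : MK.Adj (U ((4 : ZMod 8), (1 : Fin 2))) (U ((3 : ZMod 8), (1 : Fin 2))) ↔ MK.Adj ((4 : ZMod 8), (1 : Fin 2)) ((3 : ZMod 8), (1 : Fin 2)) := U.map_rel_iff
                  rw [h72, h48] at hiff
                  exact absurd hiff (by decide)
                · have hiff : MK.Adj (U ((4 : ZMod 8), (1 : Fin 2))) (U ((5 : ZMod 8), (1 : Fin 2))) ↔ MK.Adj ((4 : ZMod 8), (1 : Fin 2)) ((5 : ZMod 8), (1 : Fin 2)) := U.map_rel_iff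
                  rw [h72, h62] at hiff
                  exact absurd hiff (by decide)
              · exact absurd (U.injective (h70.trans h64.symm)) (by decide)
          · exact absurd (U.injective (h62.trans h48.symm)) (by decide)
      · exact absurd (U.injective (h46.trans h4.symm)) (by decide)

abbrev va : ZMod 8 × Fin 2 := ((0 : ZMod 8), (0 : Fin 2))
abbrev vb : ZMod 8 × Fin 2 := ((1 : ZMod 8), (0 : Fin 2))
abbrev vc : ZMod 8 × Fin 2 := ((0 : ZMod 8), (1 : Fin 2))

abbrev Arc : Type := {t : (ZMod 8 × Fin 2) × (ZMod 8 × Fin 2) × (ZMod 8 × Fin 2) //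
  MK.Adj t.1 t.2.1 ∧ MK.Adj t.1 t.2.2 ∧ t.2.1 ≠ t.2.2}

set_option maxHeartbeats 4000000 in
lemma arc_card : Fintype.card Arc = 96 := by decide

def tripleOf (T : MK ≃g MK) : Arc :=
  ⟨(T va, T vb, T vc),
    T.map_rel_iff.mpr (by decide),
    T.map_rel_iff.mpr (by decide),
    fun h => by have := T.injective h; exact absurd this (by decide)⟩

lemma tripleOf_inj : Function.Injective tripleOf := by
  intro T S h
  have h1 : T va = S va := congrArg (fun t => t.val.1) h
  have h2 : T vb = S vb := congrArg (fun t => t.val.2.1) h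
  have h3 : T vc = S vc := congrArg (fun t => t.val.2.2) h
  set U : MK ≃g MK := T.trans S.symm with hU
  have hUa : U va = va := by
    show S.symm (T va) = va
    rw [h1]; exact S.symm_apply_apply va
  have hUb : U vb = vb := by
    show S.symm (T vb) = vb
    rw [h2]; exact S.symm_apply_apply vb
  have hUc : U vc = vc := by
    show S.symm (T vc) = vc
    rw [h3]; exact S.symm_apply_apply vc
  have hid := rigid U hUa hUb hUc
  apply RelIso.ext
  intro v
  have hv : S.symm (T v) = v := hid v
  calc T v = S (S.symm (T v)) := (S.apply_symm_apply _).symm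
    _ = S v := by rw [hv]

set_option maxHeartbeats 4000000 in
lemma g_inj : ∀ k l : Fin 96,
    (F k va, F k vb, F k vc) = (F l va, F l vb, F l vc) → k = l := by decide

def g (k : Fin 96) : Arc := tripleOf (q k)

lemma g_injective : Function.Injective g := by
  intro k l h
  exact g_inj k l (congrArg Subtype.val h)

lemma g_bijective : Function.Bijective g :=
  (Fintype.bijective_iff_injective_and_card g).2 ⟨g_injective, by rw [arc_card, Fintype.card_fin]⟩

lemma tripleOf_surj : Function.Surjective tripleOf := by
  intro t
  obtain ⟨k, hk⟩ := g_bijective.2 t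
  exact ⟨q k, hk⟩

/-- The automorphism group of the Möbius–Kantor graph has exactly 96 elements. -/
theorem card_aut_moebiusKantor : Nat.card (MK ≃g MK) = 96 := by
  have hbij : Function.Bijective tripleOf := ⟨tripleOf_inj, tripleOf_surj⟩
  rw [Nat.card_congr (Equiv.ofBijective tripleOf hbij), Nat.card_eq_fintype_card, arc_card]
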